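/- For x ≥ 1/2, the second moment of K_n* equals K_n*(t²;x) = (n/(n+β))² x² + (n/(n+β)²)(1 + 2α + 2μ e_μ(−n r_n(x))/e_μ(n r_n(x))) x + (1/(n+β)²)(α² − (5/12 + μ e_μ(−n r_n(x))/e_μ(n r_n(x)))). -/

import Mathlib

noncomputable section

/-- θ_k = 0 if k even, 1 if k odd. -/
def theta (k : ℕ) : ℝ := if Even k then 0 else 1

/-- Dunkl coefficients γ_μ(n). -/
def gammaD (mu : ℝ) (n : ℕ) : ℝ :=
  if Even n then
    2 ^ n * (Nat.factorial (n / 2)) * Real.Gamma ((n / 2 : ℕ) + mu + 1 / 2) / Real.Gamma (mu + 1 / 2)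
  else
    2 ^ n * (Nat.factorial (n / 2)) * Real.Gamma ((n / 2 : ℕ) + mu + 3 / 2) / Real.Gamma (mu + 1 / 2)

/-- Dunkl exponential e_μ(x) = Σ xⁿ/γ_μ(n). -/
def eD (mu x : ℝ) : ℝ := ∑' n : ℕ, x ^ n / gammaD mu n

/-- r_n(x) = x - 1/(2n). -/
def rn (n : ℕ) (x : ℝ) : ℝ := x - 1 / (2 * n)

/-- Modified Dunkl Szász–Mirakjan–Kantorovich operator K_n. -/
def Kn (mu : ℝ) (n : ℕ) (f : ℝ → ℝ) (x : ℝ) : ℝ :=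
  (n / eD mu (n * rn n x)) * ∑' k : ℕ, (n * rn n x) ^ k / gammaD mu k *
    ∫ t in (((k : ℝ) + 2 * mu * theta k) / n)..(((k : ℝ) + 1 + 2 * mu * theta k) / n), f t

/-- Stancu-type modified Dunkl Szász–Kantorovich operator K_n^*. -/
def KnStar (mu a b : ℝ) (n : ℕ) (f : ℝ → ℝ) (x : ℝ) : ℝ :=
  (n / eD mu (n * rn n x)) * ∑' k : ℕ, (n * rn n x) ^ k / gammaD mu k *
    ∫ t in (((k : ℝ) + 2 * mu * theta k) / n)..(((k : ℝ) + 1 + 2 * mu * theta k) / n),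
      f ((n * t + a) / (n + b))

/-- Dunkl Szász–Kantorovich–Stancu operator T_n^*. -/
def TnStar (mu a b : ℝ) (n : ℕ) (f : ℝ → ℝ) (x : ℝ) : ℝ :=
  (n / eD mu (n * x)) * ∑' k : ℕ, (n * x) ^ k / gammaD mu k *
    ∫ t in (((k : ℝ) + 2 * mu * theta k) / n)..(((k : ℝ) + 1 + 2 * mu * theta k) / n),
      f ((n * t + a) / (n + b))

/-- Modulus of continuity of f on [0,∞). -/
def modCont (f : ℝ → ℝ) (d : ℝ) : ℝ :=
  sSup {y | ∃ t s : ℝ, 0 ≤ t ∧ 0 ≤ s ∧ |t - s| ≤ d ∧ y = |f t - f s|}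


lemma theta_nonneg (k : ℕ) : 0 ≤ theta k := by unfold theta; split <;> norm_num

lemma theta_zero : theta 0 = 0 := by simp [theta]

lemma theta_succ (k : ℕ) : theta (k + 1) = theta k + (-1) ^ k := by
  unfold theta
  rcases Nat.even_or_odd k with h | h
  · simp [Nat.even_add_one, h, h.neg_one_pow]
  · simp [Nat.even_add_one, Nat.not_even_iff_odd.mpr h, h.neg_one_pow]

lemma gammaD_zero (mu : ℝ) (hmu : 0 ≤ mu) : gammaD mu 0 = 1 := by
  have h : Real.Gamma (mu + 1/2) ≠ 0 :=
    (Real.Gamma_pos_of_pos (by linarith)).ne'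
  simp only [gammaD]
  norm_num
  exact h

lemma gammaD_succ (mu : ℝ) (hmu : 0 ≤ mu) (k : ℕ) :
    gammaD mu (k + 1) = ((k : ℝ) + 1 + 2 * mu * theta (k + 1)) * gammaD mu k := by
  rcases Nat.even_or_odd k with ⟨m, rfl⟩ | ⟨m, rfl⟩
  · -- k = m + m even, k+1 odd
    have he : Even (m + m) := ⟨m, rfl⟩
    have ho : ¬ Even (m + m + 1) := by simp [Nat.even_add_one, he]
    have hdiv1 : (m + m) / 2 = m := by omega
    have hdiv2 : (m + m + 1) / 2 = m := by omega
    have hG : Real.Gamma ((m : ℝ) + mu + 3/2) = ((m : ℝ) + mu + 1/2) * Real.Gamma ((m : ℝ) + mu + 1/2) := by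
      have : (m : ℝ) + mu + 3/2 = ((m : ℝ) + mu + 1/2) + 1 := by ring
      rw [this, Real.Gamma_add_one (by positivity)]
    unfold gammaD theta
    rw [if_neg ho, if_pos he, if_neg ho, hdiv1, hdiv2, hG]
    push_cast
    ring
  · -- k = 2m+1 odd, k+1 even
    have ho : ¬ Even (2 * m + 1) := by simp [Nat.even_add_one]
    have he : Even (2 * m + 1 + 1) := by refine ⟨m + 1, by omega⟩
    have hdiv1 : (2 * m + 1) / 2 = m := by omega
    have hdiv2 : (2 * m + 1 + 1) / 2 = m + 1 := by omega
    have hGeq : ((m + 1 : ℕ) : ℝ) + mu + 1/2 = (m : ℝ) + mu + 3/2 := by push_cast; ring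
    unfold gammaD theta
    rw [if_pos he, if_neg ho, if_pos he, hdiv1, hdiv2, hGeq, Nat.factorial_succ]
    push_cast
    ring

lemma gammaD_pos (mu : ℝ) (hmu : 0 ≤ mu) (k : ℕ) : 0 < gammaD mu k := by
  induction k with
  | zero => rw [gammaD_zero mu hmu]; norm_num
  | succ k ih =>
      rw [gammaD_succ mu hmu]
      have h1 : 0 ≤ theta (k + 1) := theta_nonneg _
      have : (0 : ℝ) < (k : ℝ) + 1 + 2 * mu * theta (k + 1) := by positivity
      exact mul_pos this ih

lemma factorial_le_gammaD (mu : ℝ) (hmu : 0 ≤ mu) (k : ℕ) :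
    (Nat.factorial k : ℝ) ≤ gammaD mu k := by
  induction k with
  | zero => rw [gammaD_zero mu hmu]; simp
  | succ k ih =>
      rw [gammaD_succ mu hmu, Nat.factorial_succ]
      push_cast
      have h1 : ((k : ℝ) + 1) ≤ (k : ℝ) + 1 + 2 * mu * theta (k + 1) := by
        have := theta_nonneg (k + 1); nlinarith
      have h2 : (0 : ℝ) ≤ (Nat.factorial k : ℝ) := by positivity
      have hf1 : (1:ℝ) ≤ (Nat.factorial k : ℝ) := by
        exact_mod_cast Nat.one_le_iff_ne_zero.mpr (Nat.factorial_ne_zero k)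
      nlinarith [gammaD_pos mu hmu k]

lemma summable_base (mu : ℝ) (hmu : 0 ≤ mu) (y : ℝ) :
    Summable (fun k : ℕ => y ^ k / gammaD mu k) := by
  apply Summable.of_abs
  refine Summable.of_nonneg_of_le (f := fun k => |y| ^ k / (Nat.factorial k : ℝ))
    (fun k => abs_nonneg _) (fun k => ?_) (Real.summable_pow_div_factorial |y|)
  rw [abs_div, abs_pow, abs_of_pos (gammaD_pos mu hmu k)]
  apply div_le_div_of_nonneg_left ?_ ?_ (factorial_le_gammaD mu hmu k)
  · positivity
  · exact_mod_cast Nat.factorial_pos k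

lemma c_ne (mu : ℝ) (hmu : 0 ≤ mu) (k : ℕ) : ((k : ℝ) + 1 + 2 * mu * theta (k + 1)) ≠ 0 := by
  have h1 := theta_nonneg (k + 1)
  have h2 : (0:ℝ) ≤ 2 * mu * theta (k + 1) := by
    apply mul_nonneg (by linarith) h1
  have h3 : (0:ℝ) ≤ (k : ℝ) := Nat.cast_nonneg k
  intro h; linarith [h.symm.le]

lemma gterm (mu : ℝ) (hmu : 0 ≤ mu) (y : ℝ) (k : ℕ) :
    ((k : ℝ) + 1 + 2 * mu * theta (k + 1)) * (y ^ (k + 1) / gammaD mu (k + 1))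
      = y * (y ^ k / gammaD mu k) := by
  rw [gammaD_succ mu hmu k]
  have hc := c_ne mu hmu k
  have hg := (gammaD_pos mu hmu k).ne'
  field_simp
  ring

lemma summable_g (mu : ℝ) (hmu : 0 ≤ mu) (y : ℝ) :
    Summable (fun k : ℕ => ((k : ℝ) + 2 * mu * theta k) * (y ^ k / gammaD mu k)) := by
  rw [← summable_nat_add_iff 1]
  have h : (fun k : ℕ => (((k + 1 : ℕ) : ℝ) + 2 * mu * theta (k + 1)) * (y ^ (k + 1) / gammaD mu (k + 1)))
      = fun k : ℕ => y * (y ^ k / gammaD mu k) := by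
    funext k
    have := gterm mu hmu y k
    push_cast
    push_cast at this
    linarith [this]
  rw [h]
  exact (summable_base mu hmu y).mul_left y

lemma momB (mu : ℝ) (hmu : 0 ≤ mu) (y : ℝ) :
    ∑' k : ℕ, ((k : ℝ) + 2 * mu * theta k) * (y ^ k / gammaD mu k) = y * eD mu y := by
  rw [Summable.tsum_eq_zero_add (summable_g mu hmu y)]
  have h0 : ((0 : ℕ) : ℝ) + 2 * mu * theta 0 = 0 := by simp [theta_zero]
  rw [show (((0:ℕ):ℝ) + 2 * mu * theta 0) * (y ^ (0:ℕ) / gammaD mu 0) = 0 by rw [h0]; ring]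
  rw [zero_add]
  have h : ∀ k : ℕ, (((k + 1 : ℕ) : ℝ) + 2 * mu * theta (k + 1)) * (y ^ (k + 1) / gammaD mu (k + 1))
      = y * (y ^ k / gammaD mu k) := by
    intro k
    have := gterm mu hmu y k
    push_cast
    push_cast at this
    linarith [this]
  rw [tsum_congr h, tsum_mul_left]
  rfl

lemma hterm (mu : ℝ) (hmu : 0 ≤ mu) (y : ℝ) (k : ℕ) :
    ((k : ℝ) + 1 + 2 * mu * theta (k + 1)) ^ 2 * (y ^ (k + 1) / gammaD mu (k + 1))
      = y * ((((k : ℝ) + 2 * mu * theta k) + 1 + 2 * mu * (-1) ^ k) * (y ^ k / gammaD mu k)) := by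
  rw [gammaD_succ mu hmu k]
  have hc := c_ne mu hmu k
  have hg := (gammaD_pos mu hmu k).ne'
  rw [theta_succ k] at *
  field_simp
  ring

lemma decomp (mu : ℝ) (y : ℝ) :
    (fun k : ℕ => (((k : ℝ) + 2 * mu * theta k) + 1 + 2 * mu * (-1) ^ k) * (y ^ k / gammaD mu k))
      = fun k : ℕ => ((k : ℝ) + 2 * mu * theta k) * (y ^ k / gammaD mu k)
          + (y ^ k / gammaD mu k) + 2 * mu * ((-y) ^ k / gammaD mu k) := by
  funext k
  have : (-y) ^ k = (-1) ^ k * y ^ k := by rw [neg_pow]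
  rw [this]
  ring

lemma summable_h (mu : ℝ) (hmu : 0 ≤ mu) (y : ℝ) :
    Summable (fun k : ℕ => ((k : ℝ) + 2 * mu * theta k) ^ 2 * (y ^ k / gammaD mu k)) := by
  rw [← summable_nat_add_iff 1]
  have h : (fun k : ℕ => (((k + 1 : ℕ) : ℝ) + 2 * mu * theta (k + 1)) ^ 2 * (y ^ (k + 1) / gammaD mu (k + 1)))
      = fun k : ℕ => y * ((((k : ℝ) + 2 * mu * theta k) + 1 + 2 * mu * (-1) ^ k) * (y ^ k / gammaD mu k)) := by
    funext k
    have := hterm mu hmu y k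
    push_cast
    push_cast at this
    linarith [this]
  rw [h]
  apply Summable.mul_left
  rw [decomp mu y]
  exact (((summable_g mu hmu y).add (summable_base mu hmu y)).add
    (((summable_base mu hmu (-y)).mul_left (2 * mu))))

lemma momC (mu : ℝ) (hmu : 0 ≤ mu) (y : ℝ) :
    ∑' k : ℕ, ((k : ℝ) + 2 * mu * theta k) ^ 2 * (y ^ k / gammaD mu k)
      = (y ^ 2 + y) * eD mu y + 2 * mu * y * eD mu (-y) := by
  rw [Summable.tsum_eq_zero_add (summable_h mu hmu y)]
  have h0 : ((0 : ℕ) : ℝ) + 2 * mu * theta 0 = 0 := by simp [theta_zero]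
  rw [show (((0:ℕ):ℝ) + 2 * mu * theta 0) ^ 2 * (y ^ (0:ℕ) / gammaD mu 0) = 0 by rw [h0]; ring]
  rw [zero_add]
  have h : ∀ k : ℕ, (((k + 1 : ℕ) : ℝ) + 2 * mu * theta (k + 1)) ^ 2 * (y ^ (k + 1) / gammaD mu (k + 1))
      = y * ((((k : ℝ) + 2 * mu * theta k) + 1 + 2 * mu * (-1) ^ k) * (y ^ k / gammaD mu k)) := by
    intro k
    have := hterm mu hmu y k
    push_cast
    push_cast at this
    linarith [this]
  rw [tsum_congr h, tsum_mul_left]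
  have := decomp mu y
  rw [this]
  rw [Summable.tsum_add (((summable_g mu hmu y).add (summable_base mu hmu y)))
      ((summable_base mu hmu (-y)).mul_left (2 * mu)),
    Summable.tsum_add (summable_g mu hmu y) (summable_base mu hmu y),
    tsum_mul_left, momB mu hmu y]
  show y * (y * eD mu y + eD mu y + 2 * mu * eD mu (-y)) = _
  ring

lemma eD_ge_one (mu : ℝ) (hmu : 0 ≤ mu) (y : ℝ) (hy : 0 ≤ y) : 1 ≤ eD mu y := by
  have h := Summable.le_tsum (summable_base mu hmu y) 0
    (fun j _ => div_nonneg (pow_nonneg hy j) (gammaD_pos mu hmu j).le)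
  rw [pow_zero, gammaD_zero mu hmu, div_one] at h
  exact h

lemma integral_sq (n : ℕ) (hn : 0 < n) (a b c : ℝ) (hnb : (n : ℝ) + b ≠ 0) :
    ∫ t in (c / (n : ℝ))..((c + 1) / (n : ℝ)), (((n : ℝ) * t + a) / ((n : ℝ) + b)) ^ 2
      = (1 / ((n : ℝ) * ((n : ℝ) + b) ^ 2)) * ((c + a) ^ 2 + (c + a) + 1 / 3) := by
  have hn' : (n : ℝ) ≠ 0 := Nat.cast_ne_zero.mpr hn.ne'
  have hderiv : ∀ t ∈ Set.uIcc (c / (n : ℝ)) ((c + 1) / (n : ℝ)),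
      HasDerivAt (fun t : ℝ => ((n : ℝ) * t + a) ^ 3 / (3 * (n : ℝ) * ((n : ℝ) + b) ^ 2))
        ((((n : ℝ) * t + a) / ((n : ℝ) + b)) ^ 2) t := by
    intro t _
    have h1 : HasDerivAt (fun t : ℝ => (n : ℝ) * t + a) (n : ℝ) t := by
      simpa using ((hasDerivAt_id t).const_mul (n : ℝ)).add_const a
    have h2 := (h1.pow 3).div_const (3 * (n : ℝ) * ((n : ℝ) + b) ^ 2)
    refine h2.congr_deriv ?_
    norm_num
    field_simp
  rw [intervalIntegral.integral_eq_sub_of_hasDerivAt hderiv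
    (Continuous.intervalIntegrable (by continuity) _ _)]
  field_simp
  ring


theorem KnStar_sq (mu a b : ℝ) (hmu : 0 ≤ mu) (ha : 0 ≤ a) (hab : a ≤ b)
    (n : ℕ) (hn : 0 < n) (x : ℝ) (hx : 1 / 2 ≤ x) :
    KnStar mu a b n (fun t => t ^ 2) x
      = (n / (n + b)) ^ 2 * x ^ 2
        + (n / (n + b) ^ 2) * (1 + 2 * a + 2 * mu * eD mu (-(n * rn n x)) / eD mu (n * rn n x)) * x
        + (1 / (n + b) ^ 2)
            * (a ^ 2 - (5 / 12 + mu * eD mu (-(n * rn n x)) / eD mu (n * rn n x))) := by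
  have hn' : (n : ℝ) ≠ 0 := Nat.cast_ne_zero.mpr hn.ne'
  have hn1 : (1 : ℝ) ≤ (n : ℝ) := Nat.one_le_cast.mpr hn
  have hb : 0 ≤ b := le_trans ha hab
  have hnb : (n : ℝ) + b ≠ 0 := by positivity
  have hy_eq : (n : ℝ) * rn n x = (n : ℝ) * x - 1 / 2 := by
    unfold rn; field_simp
  have hy : 0 ≤ (n : ℝ) * x - 1 / 2 := by nlinarith
  have he1 : 1 ≤ eD mu ((n : ℝ) * x - 1 / 2) := eD_ge_one mu hmu _ hy
  have he : eD mu ((n : ℝ) * x - 1 / 2) ≠ 0 := by linarith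
  unfold KnStar
  rw [hy_eq]
  have hint : ∀ k : ℕ,
      ((n : ℝ) * x - 1 / 2) ^ k / gammaD mu k *
        ∫ t in (((k : ℝ) + 2 * mu * theta k) / n)..(((k : ℝ) + 1 + 2 * mu * theta k) / n),
          (fun t : ℝ => t ^ 2) (((n : ℝ) * t + a) / ((n : ℝ) + b))
      = (1 / ((n : ℝ) * ((n : ℝ) + b) ^ 2)) *
          (((k : ℝ) + 2 * mu * theta k) ^ 2 * (((n : ℝ) * x - 1 / 2) ^ k / gammaD mu k)
            + (2 * a + 1) * (((k : ℝ) + 2 * mu * theta k) * (((n : ℝ) * x - 1 / 2) ^ k / gammaD mu k))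
            + (a ^ 2 + a + 1 / 3) * (((n : ℝ) * x - 1 / 2) ^ k / gammaD mu k)) := by
    intro k
    have hb2 : ((k : ℝ) + 1 + 2 * mu * theta k) = ((k : ℝ) + 2 * mu * theta k) + 1 := by ring
    simp only []
    rw [hb2, integral_sq n hn a b ((k : ℝ) + 2 * mu * theta k) hnb]
    ring
  rw [tsum_congr hint, tsum_mul_left]
  set Y : ℝ := (n : ℝ) * x - 1 / 2 with hY
  have Sh := summable_h mu hmu Y
  have Sg := summable_g mu hmu Y
  have Sb := summable_base mu hmu Y
  rw [Summable.tsum_add (Sh.add (Sg.mul_left (2 * a + 1))) (Sb.mul_left (a ^ 2 + a + 1 / 3)),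
    Summable.tsum_add Sh (Sg.mul_left (2 * a + 1)), tsum_mul_left, tsum_mul_left,
    momB mu hmu Y, momC mu hmu Y]
  show (n : ℝ) / eD mu Y * (1 / ((n : ℝ) * ((n : ℝ) + b) ^ 2) *
      ((Y ^ 2 + Y) * eD mu Y + 2 * mu * Y * eD mu (-Y)
        + (2 * a + 1) * (Y * eD mu Y) + (a ^ 2 + a + 1 / 3) * eD mu Y)) = _
  set E' : ℝ := eD mu (-Y) with hE'
  set E : ℝ := eD mu Y with hE
  rw [hY]
  field_simp
  ring
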